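/- Satisfiability reduces to model checking: a DL-PA formula φ with variables P_φ = {p₁,…,pₙ} is satisfiable if and only if every valuation V satisfies ⟨M_φ⟩φ, where M_φ is the program (+p₁ ∪ -p₁); … ; (+pₙ ∪ -pₙ). Equivalently, φ is satisfiable iff the empty valuation satisfies ⟨M_φ⟩φ. -/

import Mathlib

/-- Valuations: sets of propositional variables. -/
abbrev Val := Set ℕ

/-- Atomic assignments: non-empty finite partial functions from variables to Bool. -/
abbrev Atom := {α : Finmap (fun _ : ℕ => Bool) // α.keys.Nonempty}

/-- The assignment +p (p := ⊤). -/
def posAssign (p : ℕ) : Atom :=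
  ⟨Finmap.singleton p true, by simp⟩

/-- The assignment -p (p := ⊥). -/
def negAssign (p : ℕ) : Atom :=
  ⟨Finmap.singleton p false, by simp⟩

/-- Update of a valuation by an assignment. -/
def upd (V : Val) (α : Atom) : Val :=
  {p | match α.1.lookup p with
       | some b => b = true
       | none => p ∈ V}

/-- Successive update by a sequence (trace) of assignments. -/
def updSeq (V : Val) (σ : List Atom) : Val := σ.foldl upd V

mutual
inductive Form : Type
  | atom : ℕ → Form
  | neg : Form → Form
  | conj : Form → Form → Form
  | box : Prog → Form → Form
inductive Prog : Type
  | assign : Atom → Prog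
  | seq : Prog → Prog → Prog
  | choice : Prog → Prog → Prog
  | star : Prog → Prog
  | test : Form → Prog
end

noncomputable instance : DecidableEq Form := Classical.decEq _
noncomputable instance : DecidableEq Prog := Classical.decEq _

def comp2 (r s : Set (Val × Val)) : Set (Val × Val) :=
  {x | ∃ W, (x.1, W) ∈ r ∧ (W, x.2) ∈ s}

def iter (r : Set (Val × Val)) : ℕ → Set (Val × Val)
  | 0 => {x | x.1 = x.2}
  | n + 1 => comp2 r (iter r n)

mutual
/-- Semantics of formulas: the set of valuations satisfying the formula. -/
def sat : Form → Set Val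
  | .atom p => {V | p ∈ V}
  | .neg φ => (sat φ)ᶜ
  | .conj φ ψ => sat φ ∩ sat ψ
  | .box π φ => {V | ∀ V', (V, V') ∈ rel π → V' ∈ sat φ}
/-- Semantics of programs: a relation between valuations. -/
def rel : Prog → Set (Val × Val)
  | .assign α => {x | x.2 = upd x.1 α}
  | .seq a b => comp2 (rel a) (rel b)
  | .choice a b => rel a ∪ rel b
  | .star a => {x | ∃ n, x ∈ iter (rel a) n}
  | .test φ => {x | x.1 = x.2 ∧ x.1 ∈ sat φ}
end

/-- Validity. -/
def valid (φ : Form) : Prop := ∀ V : Val, V ∈ sat φ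

/-- Diamond. -/
def dia (π : Prog) (φ : Form) : Form := .neg (.box π (.neg φ))

/-- Implication. -/
def implF (φ ψ : Form) : Form := .neg (.conj φ (.neg ψ))

/-- A tautology ⊤. -/
def topF : Form := .neg (.conj (.atom 0) (.neg (.atom 0)))

mutual
/-- Length of formulas. -/
def lenF : Form → ℕ
  | .atom _ => 1
  | .neg φ => 1 + lenF φ
  | .conj φ ψ => 1 + lenF φ + lenF ψ
  | .box π φ => 1 + lenP π + lenF φ
/-- Length of programs. -/
def lenP : Prog → ℕ
  | .assign α => α.1.keys.card
  | .seq a b => 1 + lenP a + lenP b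
  | .choice a b => 1 + lenP a + lenP b
  | .star a => 1 + lenP a
  | .test φ => 1 + lenF φ
end

mutual
/-- Closure of a formula. -/
noncomputable def cl : Form → Finset Form
  | .atom p => {Form.atom p}
  | .neg φ => insert (Form.neg φ) (cl φ)
  | .conj φ ψ => insert (Form.conj φ ψ) (cl φ ∪ cl ψ)
  | .box π φ => clBox π φ ∪ cl φ
termination_by φ => sizeOf φ
/-- cl□([π]φ). -/
noncomputable def clBox : Prog → Form → Finset Form
  | .assign α, φ => insert (Form.box (.assign α) φ) (α.1.keys.image Form.atom)
  | .seq a b, φ => insert (Form.box (.seq a b) φ) (clBox a (Form.box b φ))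
  | .choice a b, φ => insert (Form.box (.choice a b) φ) (clBox a φ ∪ clBox b φ)
  | .star a, φ => insert (Form.box (.star a) φ) (clBox a (Form.box (.star a) φ))
  | .test ψ, φ => insert (Form.box (.test ψ) φ) (cl ψ)
termination_by π _ => sizeOf π
end

/-- Extended closure. -/
noncomputable def clPlus (φ : Form) : Finset Form :=
  cl φ ∪ (cl φ).image Form.neg

mutual
/-- Variables occurring in a formula. -/
def varsF : Form → Finset ℕ
  | .atom p => {p}
  | .neg φ => varsF φ
  | .conj φ ψ => varsF φ ∪ varsF ψ
  | .box π φ => varsP π ∪ varsF φ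
/-- Variables occurring in a program. -/
def varsP : Prog → Finset ℕ
  | .assign α => α.1.keys
  | .seq a b => varsP a ∪ varsP b
  | .choice a b => varsP a ∪ varsP b
  | .star a => varsP a
  | .test φ => varsF φ
end

mutual
/-- Execution traces of a formula. -/
def exeF : Form → Set (List Atom)
  | .atom _ => {[]}
  | .neg φ => exeF φ
  | .conj φ ψ => exeF φ ∪ exeF ψ
  | .box π φ => exeP π ∪ exeF φ
/-- Execution traces of a program. -/
def exeP : Prog → Set (List Atom)
  | .assign α => {[α]}
  | .seq a b => {σ | ∃ σ₁ ∈ exeP a, ∃ σ₂ ∈ exeP b, σ = σ₁ ++ σ₂}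
  | .choice a b => exeP a ∪ exeP b
  | .star a => {σ | ∃ l : List (List Atom), (∀ τ ∈ l, τ ∈ exeP a) ∧ σ = l.flatten}
  | .test φ => exeF φ
end

mutual
/-- Star-free formulas. -/
def starFreeF : Form → Prop
  | .atom _ => True
  | .neg φ => starFreeF φ
  | .conj φ ψ => starFreeF φ ∧ starFreeF ψ
  | .box π φ => starFreeP π ∧ starFreeF φ
/-- Star-free programs. -/
def starFreeP : Prog → Prop
  | .assign _ => True
  | .seq a b => starFreeP a ∧ starFreeP b
  | .choice a b => starFreeP a ∧ starFreeP b
  | .star _ => False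
  | .test φ => starFreeF φ
end

/-- Test-free programs (assignments, ;, ∪, *). -/
def testFree : Prog → Prop
  | .assign _ => True
  | .seq a b => testFree a ∧ testFree b
  | .choice a b => testFree a ∧ testFree b
  | .star a => testFree a
  | .test _ => False

/-- Programs built from assignments with ; and ∪ only. -/
def basicProg : Prog → Prop
  | .assign _ => True
  | .seq a b => basicProg a ∧ basicProg b
  | .choice a b => basicProg a ∧ basicProg b
  | .star _ => False
  | .test _ => False

/-- Conjunction of a list of formulas. -/
def bigConj : List Form → Form
  | [] => topF
  | φ :: l => .conj φ (bigConj l)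

/-- The program (+p₁ ∪ -p₁); … ;(+pₙ ∪ -pₙ). -/
def Mprog : List ℕ → Prog
  | [] => .test topF
  | p :: l => .seq (.choice (.assign (posAssign p)) (.assign (negAssign p))) (Mprog l)

lemma upd_singleton (V : Val) (p : ℕ) (b : Bool) (h) (q : ℕ) :
    q ∈ upd V ⟨Finmap.singleton p b, h⟩ ↔ if q = p then b = true else q ∈ V := by
  simp only [upd, Set.mem_setOf_eq]
  by_cases hq : q = p
  · subst hq; rw [Finmap.lookup_singleton_eq]; simp
  · rw [Finmap.lookup_eq_none.2 (by rw [Finmap.mem_singleton]; exact hq)]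
    simp [hq]

lemma mem_sat_dia (π : Prog) (φ : Form) (V : Val) :
    V ∈ sat (dia π φ) ↔ ∃ W, (V, W) ∈ rel π ∧ W ∈ sat φ := by
  simp only [dia, sat, Set.mem_compl_iff, Set.mem_setOf_eq]
  push_neg
  simp only [not_not]

mutual
theorem coincF (φ : Form) (X : Finset ℕ) (hX : varsF φ ⊆ X) (V V' : Val)
    (h : ∀ p ∈ X, (p ∈ V ↔ p ∈ V')) : V ∈ sat φ ↔ V' ∈ sat φ := by
  cases φ with
  | atom p =>
    simp only [sat, Set.mem_setOf_eq]
    exact h p (hX (by simp [varsF]))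
  | neg ψ =>
    have := coincF ψ X (by simpa [varsF] using hX) V V' h
    simp only [sat, Set.mem_compl_iff]; tauto
  | conj ψ χ =>
    have h1 := coincF ψ X (fun p hp => hX (by simp [varsF, hp])) V V' h
    have h2 := coincF χ X (fun p hp => hX (by simp [varsF, hp])) V V' h
    simp only [sat, Set.mem_inter_iff]; tauto
  | box π ψ =>
    have hπ : varsP π ⊆ X := fun p hp => hX (by simp [varsF, hp])
    have hψ : varsF ψ ⊆ X := fun p hp => hX (by simp [varsF, hp])
    simp only [sat, Set.mem_setOf_eq]
    constructor
    · intro H W' hW'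
      obtain ⟨W, hW, hagree⟩ := coincP π X hπ V' V W' (fun p hp => (h p hp).symm) hW'
      exact (coincF ψ X hψ W W' (fun p hp => (hagree p hp).symm)).mp (H W hW)
    · intro H W hW
      obtain ⟨W', hW', hagree⟩ := coincP π X hπ V V' W h hW
      exact (coincF ψ X hψ W W' hagree).mpr (H W' hW')

theorem coincP (π : Prog) (X : Finset ℕ) (hX : varsP π ⊆ X) (V V' W : Val)
    (h : ∀ p ∈ X, (p ∈ V ↔ p ∈ V')) (hrel : (V, W) ∈ rel π) :
    ∃ W', (V', W') ∈ rel π ∧ ∀ p ∈ X, (p ∈ W ↔ p ∈ W') := by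
  cases π with
  | assign α =>
    simp only [rel, Set.mem_setOf_eq] at hrel
    subst hrel
    refine ⟨upd V' α, by simp [rel], ?_⟩
    intro p hp
    simp only [upd, Set.mem_setOf_eq]
    cases hl : α.1.lookup p with
    | some b => simp
    | none => exact h p hp
  | seq a b =>
    obtain ⟨U, h1, h2⟩ := hrel
    obtain ⟨U', hU', ha⟩ :=
      coincP a X (fun p hp => hX (by simp [varsP, hp])) V V' U h h1
    obtain ⟨W', hW', hb⟩ :=
      coincP b X (fun p hp => hX (by simp [varsP, hp])) U U' W ha h2
    exact ⟨W', ⟨U', hU', hW'⟩, hb⟩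
  | choice a b =>
    cases hrel with
    | inl h1 =>
      obtain ⟨W', hW', hb⟩ :=
        coincP a X (fun p hp => hX (by simp [varsP, hp])) V V' W h h1
      exact ⟨W', Or.inl hW', hb⟩
    | inr h1 =>
      obtain ⟨W', hW', hb⟩ :=
        coincP b X (fun p hp => hX (by simp [varsP, hp])) V V' W h h1
      exact ⟨W', Or.inr hW', hb⟩
  | star a =>
    obtain ⟨n, hn⟩ := hrel
    have hsub : varsP a ⊆ X := fun p hp => hX (by simpa [varsP] using hp)
    have key : ∀ n (V V' W : Val), (∀ p ∈ X, (p ∈ V ↔ p ∈ V')) →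
        (V, W) ∈ iter (rel a) n →
        ∃ W', (V', W') ∈ iter (rel a) n ∧ ∀ p ∈ X, (p ∈ W ↔ p ∈ W') := by
      intro n
      induction n with
      | zero =>
        intro V V' W h hit
        simp only [iter, Set.mem_setOf_eq] at hit
        subst hit
        exact ⟨V', rfl, h⟩
      | succ n ih =>
        intro V V' W h hit
        obtain ⟨U, h1, h2⟩ := hit
        obtain ⟨U', hU', ha⟩ := coincP a X hsub V V' U h h1
        obtain ⟨W', hW', hb⟩ := ih U U' W ha h2
        exact ⟨W', ⟨U', hU', hW'⟩, hb⟩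
    obtain ⟨W', hW', hb⟩ := key n V V' W h hn
    exact ⟨W', ⟨n, hW'⟩, hb⟩
  | test ψ =>
    obtain ⟨heq, hs⟩ := hrel
    have heq' : V = W := heq
    have hs' : V ∈ sat ψ := hs
    subst heq'
    refine ⟨V', ⟨rfl, ?_⟩, fun p hp => ?_⟩
    · exact (coincF ψ X (fun p hp => hX (by simpa [varsP] using hp)) V V' h).mp hs'
    · exact h p hp
end

lemma sat_topF (V : Val) : V ∈ sat topF := by
  simp only [topF, sat, Set.mem_compl_iff, Set.mem_inter_iff, Set.mem_setOf_eq]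
  tauto

theorem reach (l : List ℕ) : ∀ (V W : Val),
    (∀ p, p ∉ l → (p ∈ W ↔ p ∈ V)) → (V, W) ∈ rel (Mprog l) := by
  induction l with
  | nil =>
    intro V W h
    have : V = W := Set.ext fun p => (h p (by simp)).symm
    exact ⟨this, sat_topF V⟩
  | cons p l ih =>
    intro V W h
    by_cases hp : p ∈ W
    · refine ⟨upd V (posAssign p), Or.inl rfl, ih _ W ?_⟩
      intro q hq
      rw [show q ∈ upd V (posAssign p) ↔ (if q = p then true = true else q ∈ V) from
        upd_singleton V p true (posAssign p).2 q]
      by_cases hqp : q = p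
      · subst hqp; simp [hp]
      · simp only [if_neg hqp]
        exact h q (by simp [hqp, hq])
    · refine ⟨upd V (negAssign p), Or.inr rfl, ih _ W ?_⟩
      intro q hq
      rw [show q ∈ upd V (negAssign p) ↔ (if q = p then false = true else q ∈ V) from
        upd_singleton V p false (negAssign p).2 q]
      by_cases hqp : q = p
      · subst hqp; simp [hp]
      · simp only [if_neg hqp]
        exact h q (by simp [hqp, hq])

theorem sat_iff_model_check (φ : Form) (l : List ℕ) (hl : l.toFinset = varsF φ) :
    ((∃ V : Val, V ∈ sat φ) ↔ ∀ V : Val, V ∈ sat (dia (Mprog l) φ)) ∧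
    ((∃ V : Val, V ∈ sat φ) ↔ (∅ : Val) ∈ sat (dia (Mprog l) φ)) := by
  have h1 : (∃ V : Val, V ∈ sat φ) → ∀ V : Val, V ∈ sat (dia (Mprog l) φ) := by
    rintro ⟨W, hW⟩ V
    rw [mem_sat_dia]
    classical
    refine ⟨{q | if q ∈ l then q ∈ W else q ∈ V}, reach l V _ ?_, ?_⟩
    · intro q hq
      simp [Set.mem_setOf_eq, hq]
    · refine (coincF φ (varsF φ) (subset_refl _) W _ ?_).mp hW
      intro q hq
      have hql : q ∈ l := by rw [← hl] at hq; simpa using hq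
      simp [Set.mem_setOf_eq, hql]
  have h2 : (∅ : Val) ∈ sat (dia (Mprog l) φ) → ∃ V : Val, V ∈ sat φ := by
    intro H
    obtain ⟨W, _, hW⟩ := (mem_sat_dia _ _ _).mp H
    exact ⟨W, hW⟩
  exact ⟨⟨h1, fun H => h2 (H ∅)⟩, ⟨fun e => h1 e ∅, h2⟩⟩
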